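/- Let f be a nonzero s-sparse multilinear polynomial over GF(2) in n variables of degree at most d, with d ≥ 2⌊log₂ s⌋. Then for p' = (d − ⌊log₂ s⌋)/d, Pr_{x ~ D_{n,p'}}[f(x)=1] ≥ 2^{−H₂(⌊log₂ s⌋/d)·d}, where H₂(x) = −x log₂ x − (1−x) log₂(1−x) is the binary entropy function. -/

import Mathlib

/-- Evaluation of a multilinear polynomial over GF(2), given by its set of
monomials, at a Boolean point: parity of the number of satisfied monomials. -/
def evalGF2 {n : ℕ} (P : Finset (Finset (Fin n))) (x : Fin n → Bool) : Bool :=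
  decide (Odd (P.filter (fun M => ∀ i ∈ M, x i = true)).card)

/-- Weight of a point `x ∈ {0,1}^n` under the `p`-product distribution. -/
noncomputable def prodWeight {n : ℕ} (p : ℝ) (x : Fin n → Bool) : ℝ :=
  ∏ i, (if x i then p else 1 - p)

/-- Probability under the `p`-product distribution `D_{n,p}` of an event. -/
noncomputable def prodProb {n : ℕ} (p : ℝ) (E : (Fin n → Bool) → Prop)
    [DecidablePred E] : ℝ :=
  ∑ x ∈ Finset.univ.filter (fun x : Fin n → Bool => E x), prodWeight p x

/-- The binary entropy function `H₂(x) = -x log₂ x - (1-x) log₂ (1-x)`. -/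
noncomputable def binEnt (x : ℝ) : ℝ :=
  -x * Real.logb 2 x - (1 - x) * Real.logb 2 (1 - x)


open Finset

lemma sum_prodWeight {n : ℕ} (p : ℝ) :
    ∑ x : Fin n → Bool, prodWeight p x = 1 := by
  have h := Finset.prod_univ_sum (fun _ : Fin n => (univ : Finset Bool))
    (fun _ b => if b = true then p else 1-p)
  rw [Fintype.piFinset_univ] at h
  simp only [prodWeight]
  rw [← h]
  simp

lemma prodWeight_eq_true {n : ℕ} (p : ℝ) {x : Fin n → Bool} {i : Fin n} (hx : x i = true) :
    prodWeight p x = p * ∏ j ∈ univ.erase i, (if x j then p else 1 - p) := by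
  rw [prodWeight, ← Finset.mul_prod_erase univ _ (mem_univ i), hx]
  simp

lemma prodWeight_eq_false {n : ℕ} (p : ℝ) {x : Fin n → Bool} {i : Fin n} (hx : x i = false) :
    prodWeight p x = (1 - p) * ∏ j ∈ univ.erase i, (if x j then p else 1 - p) := by
  rw [prodWeight, ← Finset.mul_prod_erase univ _ (mem_univ i), hx]
  simp

lemma erase_prod_update {n : ℕ} (p : ℝ) (x : Fin n → Bool) (i : Fin n) (b : Bool) :
    ∏ j ∈ univ.erase i, (if Function.update x i b j then p else 1 - p)
      = ∏ j ∈ univ.erase i, (if x j then p else 1 - p) := by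
  apply Finset.prod_congr rfl
  intro j hj
  rw [Function.update_of_ne (Finset.ne_of_mem_erase hj)]

lemma half_sum {n : ℕ} (p : ℝ) (i : Fin n) (A : (Fin n → Bool) → Prop) [DecidablePred A]
    (hA : ∀ x b, A (Function.update x i b) ↔ A x) :
    (∑ x ∈ univ.filter (fun x => A x ∧ x i = true), prodWeight p x = p * prodProb p A)
    ∧ (∑ x ∈ univ.filter (fun x => A x ∧ x i = false), prodWeight p x = (1-p) * prodProb p A) := by
  set r : (Fin n → Bool) → ℝ := fun x => ∏ j ∈ univ.erase i, (if x j then p else 1 - p) with hr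
  have hT : ∑ x ∈ univ.filter (fun x => A x ∧ x i = true), prodWeight p x
      = p * ∑ x ∈ univ.filter (fun x => A x ∧ x i = true), r x := by
    rw [Finset.mul_sum]
    apply Finset.sum_congr rfl
    intro x hx
    simp only [mem_filter] at hx
    exact prodWeight_eq_true p hx.2.2
  have hF : ∑ x ∈ univ.filter (fun x => A x ∧ x i = false), prodWeight p x
      = (1-p) * ∑ x ∈ univ.filter (fun x => A x ∧ x i = false), r x := by
    rw [Finset.mul_sum]
    apply Finset.sum_congr rfl
    intro x hx
    simp only [mem_filter] at hx
    exact prodWeight_eq_false p hx.2.2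
  have hbij : ∑ x ∈ univ.filter (fun x => A x ∧ x i = true), r x
      = ∑ x ∈ univ.filter (fun x => A x ∧ x i = false), r x := by
    apply Finset.sum_nbij' (fun x => Function.update x i false) (fun x => Function.update x i true)
    · intro a ha
      simp only [mem_filter, mem_univ, true_and] at ha ⊢
      exact ⟨(hA a false).mpr ha.1, Function.update_self i false a⟩
    · intro a ha
      simp only [mem_filter, mem_univ, true_and] at ha ⊢
      exact ⟨(hA a true).mpr ha.1, Function.update_self i true a⟩
    · intro a ha
      simp only [mem_filter, mem_univ, true_and] at ha
      rw [Function.update_idem, ← ha.2, Function.update_eq_self]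
    · intro a ha
      simp only [mem_filter, mem_univ, true_and] at ha
      rw [Function.update_idem, ← ha.2, Function.update_eq_self]
    · intro a ha
      exact (erase_prod_update p a i false).symm
  have hsplit : prodProb p A
      = ∑ x ∈ univ.filter (fun x => A x ∧ x i = true), prodWeight p x
        + ∑ x ∈ univ.filter (fun x => A x ∧ x i = false), prodWeight p x := by
    rw [prodProb, ← Finset.sum_filter_add_sum_filter_not (univ.filter (fun x => A x)) (fun x => x i = true)]
    rw [Finset.filter_filter, Finset.filter_filter]
    congr 2
    ext x
    simp [Bool.not_eq_true]
  constructor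
  · rw [hT, hsplit, hT, hF, hbij]; ring
  · rw [hF, hsplit, hT, hF, hbij]; ring

lemma prodProb_split {n : ℕ} (p : ℝ) (i : Fin n) (E A B : (Fin n → Bool) → Prop)
    [DecidablePred E] [DecidablePred A] [DecidablePred B]
    (hA : ∀ x b, A (Function.update x i b) ↔ A x)
    (hB : ∀ x b, B (Function.update x i b) ↔ B x)
    (hEt : ∀ x, x i = true → (E x ↔ A x))
    (hEf : ∀ x, x i = false → (E x ↔ B x)) :
    prodProb p E = p * prodProb p A + (1-p) * prodProb p B := by
  have h1 : prodProb p E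
      = ∑ x ∈ univ.filter (fun x => E x ∧ x i = true), prodWeight p x
        + ∑ x ∈ univ.filter (fun x => E x ∧ x i = false), prodWeight p x := by
    rw [prodProb, ← Finset.sum_filter_add_sum_filter_not (univ.filter (fun x => E x)) (fun x => x i = true)]
    rw [Finset.filter_filter, Finset.filter_filter]
    congr 2
    ext x
    simp [Bool.not_eq_true]
  have h2 : univ.filter (fun x : Fin n → Bool => E x ∧ x i = true)
      = univ.filter (fun x => A x ∧ x i = true) := by
    apply Finset.filter_congr
    intro x _
    constructor
    · rintro ⟨he, ht⟩; exact ⟨(hEt x ht).mp he, ht⟩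
    · rintro ⟨ha, ht⟩; exact ⟨(hEt x ht).mpr ha, ht⟩
  have h3 : univ.filter (fun x : Fin n → Bool => E x ∧ x i = false)
      = univ.filter (fun x => B x ∧ x i = false) := by
    apply Finset.filter_congr
    intro x _
    constructor
    · rintro ⟨he, ht⟩; exact ⟨(hEf x ht).mp he, ht⟩
    · rintro ⟨ha, ht⟩; exact ⟨(hEf x ht).mpr ha, ht⟩
  rw [h1, h2, h3, (half_sum p i A hA).1, (half_sum p i B hB).2]

lemma evalGF2_update {n : ℕ} (P : Finset (Finset (Fin n))) (i : Fin n)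
    (hP : ∀ M ∈ P, i ∉ M) (x : Fin n → Bool) (b : Bool) :
    evalGF2 P (Function.update x i b) = evalGF2 P x := by
  unfold evalGF2
  have : P.filter (fun M => ∀ j ∈ M, Function.update x i b j = true)
      = P.filter (fun M => ∀ j ∈ M, x j = true) := by
    apply Finset.filter_congr
    intro M hM
    constructor
    · intro h j hj
      have := h j hj
      rwa [Function.update_of_ne (by rintro rfl; exact hP M hM hj)] at this
    · intro h j hj
      rw [Function.update_of_ne (by rintro rfl; exact hP M hM hj)]
      exact h j hj
  rw [this]


lemma evalGF2_of_false {n : ℕ} (P : Finset (Finset (Fin n))) (i : Fin n)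
    (x : Fin n → Bool) (hx : x i = false) :
    evalGF2 P x = evalGF2 (P.filter (fun M => i ∉ M)) x := by
  unfold evalGF2
  rw [Finset.filter_filter]
  have : P.filter (fun M => ∀ j ∈ M, x j = true)
      = P.filter (fun M => i ∉ M ∧ ∀ j ∈ M, x j = true) := by
    apply Finset.filter_congr
    intro M hM
    constructor
    · intro h
      refine ⟨fun hi => ?_, h⟩
      have := h i hi
      rw [hx] at this
      exact Bool.false_ne_true this
    · exact fun h => h.2
  rw [this]

lemma evalGF2_of_true {n : ℕ} (P : Finset (Finset (Fin n))) (i : Fin n)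
    (x : Fin n → Bool) (hx : x i = true) :
    evalGF2 P x
      = evalGF2 (symmDiff ((P.filter (fun M => i ∈ M)).image (fun M => M.erase i))
          (P.filter (fun M => i ∉ M))) x := by
  classical
  set sat : Finset (Fin n) → Prop := fun M => ∀ j ∈ M, x j = true with hsat
  set g := (P.filter (fun M => i ∈ M)).image (fun M => M.erase i) with hg
  set h := P.filter (fun M => i ∉ M) with hh
  -- split count of P
  have hsplitP : (P.filter sat).card
      = ((P.filter (fun M => i ∈ M)).filter sat).card + (h.filter sat).card := by
    have hs := Finset.card_filter_add_card_filter_not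
      (s := P.filter sat) (p := fun M => i ∈ M)
    rw [Finset.filter_comm sat (fun M => i ∈ M) P, Finset.filter_comm sat (fun M => i ∉ M) P] at hs
    exact hs.symm
  -- count of g
  have hcg : (g.filter sat).card = ((P.filter (fun M => i ∈ M)).filter sat).card := by
    rw [hg, Finset.filter_image]
    have hcong : (P.filter (fun M => i ∈ M)).filter (fun M => sat (M.erase i))
        = (P.filter (fun M => i ∈ M)).filter sat := by
      apply Finset.filter_congr
      intro M hM
      simp only [Finset.mem_filter] at hM
      constructor
      · intro hs j hj
        rcases eq_or_ne j i with rfl | hne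
        · exact hx
        · exact hs j (Finset.mem_erase.mpr ⟨hne, hj⟩)
      · intro hs j hj
        exact hs j (Finset.mem_of_mem_erase hj)
    rw [hcong]
    apply Finset.card_image_of_injOn
    intro M hM N hN hMN
    simp only [coe_filter, Set.mem_setOf_eq, Finset.mem_coe, Finset.mem_filter] at hM hN
    have : insert i (M.erase i) = insert i (N.erase i) := by
      dsimp only at hMN; rw [hMN]
    rwa [Finset.insert_erase hM.1.2, Finset.insert_erase hN.1.2] at this
  -- symmDiff count
  have hfsd : (symmDiff g h).filter sat = symmDiff (g.filter sat) (h.filter sat) := by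
    ext M
    simp only [Finset.mem_filter, Finset.mem_symmDiff]
    tauto
  have hcsd : ((symmDiff g h).filter sat).card + 2 * ((g.filter sat) ∩ (h.filter sat)).card
      = (g.filter sat).card + (h.filter sat).card := by
    rw [hfsd]
    set a := g.filter sat
    set b := h.filter sat
    have h1 : symmDiff a b = (a ∪ b) \ (a ∩ b) := by
      ext M; simp [Finset.mem_symmDiff]; tauto
    rw [h1, Finset.card_sdiff_of_subset (Finset.inter_subset_union)]
    have h2 := Finset.card_union_add_card_inter a b
    have h3 : (a ∩ b).card ≤ (a ∪ b).card :=
      Finset.card_le_card (Finset.inter_subset_union)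
    omega
  unfold evalGF2
  have : Odd ((P.filter (fun M => ∀ j ∈ M, x j = true)).card)
      ↔ Odd (((symmDiff g h).filter (fun M => ∀ j ∈ M, x j = true)).card) := by
    have e1 : (P.filter (fun M => ∀ j ∈ M, x j = true)) = P.filter sat := rfl
    rw [e1]
    have e2 : ((symmDiff g h).filter (fun M => ∀ j ∈ M, x j = true)) = (symmDiff g h).filter sat := rfl
    rw [e2, Nat.odd_iff, Nat.odd_iff]
    omega
  simp only [this]

lemma evalGF2_empty {n : ℕ} (x : Fin n → Bool) :
    evalGF2 (∅ : Finset (Finset (Fin n))) x = false := by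
  simp [evalGF2]

lemma evalGF2_singleton_empty {n : ℕ} (x : Fin n → Bool) :
    evalGF2 ({∅} : Finset (Finset (Fin n))) x = true := by
  simp [evalGF2, Finset.filter_singleton]

lemma prodProb_of_false {n : ℕ} (p : ℝ) (E : (Fin n → Bool) → Prop) [DecidablePred E]
    (hE : ∀ x, ¬ E x) : prodProb p E = 0 := by
  rw [prodProb, Finset.filter_false_of_mem (fun x _ => hE x), Finset.sum_empty]

lemma prodProb_of_true {n : ℕ} (p : ℝ) (E : (Fin n → Bool) → Prop) [DecidablePred E]
    (hE : ∀ x, E x) : prodProb p E = 1 := by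
  rw [prodProb, Finset.filter_true_of_mem (fun x _ => hE x)]
  exact sum_prodWeight p

lemma key_base {n : ℕ} (p : ℝ) (hp0 : 0 ≤ p) (hp1 : p ≤ 1) (d k : ℕ)
    (P : Finset (Finset (Fin n))) (hne : P.Nonempty) (hV : P.biUnion id = ∅) :
    p ^ (d - k) * (1 - p) ^ (min k d) ≤ prodProb p (fun x => evalGF2 P x = true) := by
  have hall : ∀ M ∈ P, M = ∅ := by
    intro M hM
    rw [Finset.eq_empty_iff_forall_notMem]
    intro j hj
    have : j ∈ P.biUnion id := Finset.mem_biUnion.mpr ⟨M, hM, hj⟩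
    rw [hV] at this
    exact absurd this (Finset.notMem_empty j)
  have hP : P = {∅} := by
    obtain ⟨M, hM⟩ := hne
    have hM0 := hall M hM
    subst hM0
    ext N
    simp only [Finset.mem_singleton]
    constructor
    · intro hN; exact hall N hN
    · rintro rfl; exact hM
  subst hP
  rw [prodProb_of_true p _ (fun x => evalGF2_singleton_empty x)]
  have h1 : p ^ (d-k) ≤ 1 := pow_le_one₀ hp0 hp1
  have h2 : (1-p)^(min k d) ≤ 1 := pow_le_one₀ (by linarith) (by linarith)
  nlinarith [pow_nonneg hp0 (d-k), pow_nonneg (by linarith : (0:ℝ) ≤ 1-p) (min k d)]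

lemma key {n : ℕ} (p : ℝ) (hp : 1 - p ≤ p) (hp1 : p ≤ 1) :
    ∀ (t d k : ℕ) (P : Finset (Finset (Fin n))),
      (P.biUnion id).card ≤ t → P.Nonempty → (∀ M ∈ P, M.card ≤ d) →
      P.card < 2 ^ (k + 1) →
      p ^ (d - k) * (1 - p) ^ (min k d) ≤ prodProb p (fun x => evalGF2 P x = true) := by
  have hp0 : 0 ≤ p := by linarith
  have hq0 : 0 ≤ 1 - p := by linarith
  intro t
  induction t with
  | zero =>
    intro d k P hbU hne hdeg hcard
    exact key_base p hp0 hp1 d k P hne (Finset.card_eq_zero.mp (Nat.le_zero.mp hbU))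
  | succ t ih =>
    intro d k P hbU hne hdeg hcard
    by_cases hV : P.biUnion id = ∅
    · exact key_base p hp0 hp1 d k P hne hV
    obtain ⟨i, hi⟩ := Finset.nonempty_iff_ne_empty.mpr hV
    obtain ⟨M₀, hM₀, hiM₀⟩ := Finset.mem_biUnion.mp hi
    have hiM₀' : i ∈ M₀ := hiM₀
    have hd1 : 1 ≤ d := le_trans (Finset.card_pos.mpr ⟨i, hiM₀'⟩) (hdeg M₀ hM₀)
    set g := (P.filter (fun M => i ∈ M)).image (fun M => M.erase i) with hgdef
    set h := P.filter (fun M => i ∉ M) with hhdef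
    set G := symmDiff g h with hGdef
    have hhnoti : ∀ M ∈ h, i ∉ M := fun M hM => (Finset.mem_filter.mp hM).2
    have hgnoti : ∀ M ∈ g, i ∉ M := by
      intro M hM
      obtain ⟨N, hN, rfl⟩ := Finset.mem_image.mp hM
      exact Finset.notMem_erase i N
    have hGnoti : ∀ M ∈ G, i ∉ M := by
      intro M hM
      rcases Finset.mem_symmDiff.mp hM with ⟨h1, -⟩ | ⟨h1, -⟩
      · exact hgnoti M h1
      · exact hhnoti M h1
    -- split probability
    have hsplit : prodProb p (fun x => evalGF2 P x = true)
        = p * prodProb p (fun x => evalGF2 G x = true)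
          + (1-p) * prodProb p (fun x => evalGF2 h x = true) := by
      apply prodProb_split p i
      · intro x b; rw [evalGF2_update G i hGnoti x b]
      · intro x b; rw [evalGF2_update h i hhnoti x b]
      · intro x hx
        rw [hGdef, hgdef, hhdef, evalGF2_of_true P i x hx]
      · intro x hx
        rw [hhdef, evalGF2_of_false P i x hx]
    -- cardinalities
    have hinj : Set.InjOn (fun M => Finset.erase M i) ↑(P.filter (fun M => i ∈ M)) := by
      intro M hM N hN hMN
      simp only [Finset.coe_filter, Set.mem_setOf_eq] at hM hN
      dsimp only at hMN
      have : insert i (M.erase i) = insert i (N.erase i) := by rw [hMN]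
      rwa [Finset.insert_erase hM.2, Finset.insert_erase hN.2] at this
    have hcardg : g.card = (P.filter (fun M => i ∈ M)).card :=
      Finset.card_image_of_injOn hinj
    have hcardsplit : (P.filter (fun M => i ∈ M)).card + h.card = P.card :=
      Finset.card_filter_add_card_filter_not (fun M => i ∈ M)
    -- biUnion bounds
    have hsubg : g.biUnion id ⊆ (P.biUnion id).erase i := by
      intro j hj
      obtain ⟨M, hM, hjM⟩ := Finset.mem_biUnion.mp hj
      obtain ⟨N, hN, rfl⟩ := Finset.mem_image.mp hM
      have hNP : N ∈ P := (Finset.mem_filter.mp hN).1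
      refine Finset.mem_erase.mpr ⟨(Finset.mem_erase.mp hjM).1, ?_⟩
      exact Finset.mem_biUnion.mpr ⟨N, hNP, Finset.mem_of_mem_erase hjM⟩
    have hsubh : h.biUnion id ⊆ (P.biUnion id).erase i := by
      intro j hj
      obtain ⟨M, hM, hjM⟩ := Finset.mem_biUnion.mp hj
      have hMP := Finset.mem_filter.mp hM
      refine Finset.mem_erase.mpr ⟨fun hji => hMP.2 (hji ▸ hjM), ?_⟩
      exact Finset.mem_biUnion.mpr ⟨M, hMP.1, hjM⟩
    have hsubG : G.biUnion id ⊆ (P.biUnion id).erase i := by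
      intro j hj
      obtain ⟨M, hM, hjM⟩ := Finset.mem_biUnion.mp hj
      rcases Finset.mem_symmDiff.mp hM with ⟨h1, -⟩ | ⟨h1, -⟩
      · exact hsubg (Finset.mem_biUnion.mpr ⟨M, h1, hjM⟩)
      · exact hsubh (Finset.mem_biUnion.mpr ⟨M, h1, hjM⟩)
    have herase : ((P.biUnion id).erase i).card ≤ t := by
      have := Finset.card_erase_of_mem hi
      omega
    have hbUG : (G.biUnion id).card ≤ t :=
      le_trans (Finset.card_le_card hsubG) herase
    have hbUh : (h.biUnion id).card ≤ t :=
      le_trans (Finset.card_le_card hsubh) herase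
    have hbUg : (g.biUnion id).card ≤ t :=
      le_trans (Finset.card_le_card hsubg) herase
    -- degrees
    have hdegg : ∀ M ∈ g, M.card ≤ d - 1 := by
      intro M hM
      obtain ⟨N, hN, rfl⟩ := Finset.mem_image.mp hM
      have hNP := Finset.mem_filter.mp hN
      have := Finset.card_erase_of_mem hNP.2
      have := hdeg N hNP.1
      omega
    have hdegh : ∀ M ∈ h, M.card ≤ d :=
      fun M hM => hdeg M (Finset.mem_filter.mp hM).1
    have hdegG : ∀ M ∈ G, M.card ≤ d := by
      intro M hM
      rcases Finset.mem_symmDiff.mp hM with ⟨h1, -⟩ | ⟨h1, -⟩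
      · have := hdegg M h1; omega
      · exact hdegh M h1
    by_cases hh0 : h = ∅
    · -- all monomials contain i
      have hfilterall : P.filter (fun M => i ∈ M) = P := by
        apply Finset.filter_true_of_mem
        intro M hM
        by_contra hiM
        have : M ∈ h := Finset.mem_filter.mpr ⟨hM, hiM⟩
        rw [hh0] at this
        exact absurd this (Finset.notMem_empty M)
      have hgne : g.Nonempty := by
        rw [hgdef, hfilterall]
        exact hne.image _
      have hGg : G = g := by
        rw [hGdef, hh0, ← Finset.bot_eq_empty, symmDiff_bot]
      have hPrh : prodProb p (fun x => evalGF2 h x = true) = 0 := by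
        apply prodProb_of_false
        intro x
        rw [hh0, evalGF2_empty]
        exact Bool.false_ne_true
      have hcardg' : g.card < 2 ^ (k+1) := by
        rw [hcardg, hfilterall]; exact hcard
      have hIH := ih (d-1) k g hbUg hgne hdegg hcardg'
      rw [hsplit, hGg, hPrh, mul_zero, add_zero]
      rcases le_or_gt k (d-1) with hkd | hkd
      · have e1 : d - k = (d - 1 - k) + 1 := by omega
        have e2 : min k d = k := min_eq_left (by omega)
        have e3 : min k (d-1) = k := min_eq_left hkd
        rw [e1, e2, pow_succ]
        rw [e3] at hIH
        calc p ^ (d-1-k) * p * (1-p)^k = p * (p ^ (d-1-k) * (1-p)^k) := by ring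
        _ ≤ p * prodProb p (fun x => evalGF2 g x = true) :=
            mul_le_mul_of_nonneg_left hIH hp0
      · have e1 : d - k = 0 := by omega
        have e2 : (d-1) - k = 0 := by omega
        have e3 : min k d = d := min_eq_right (by omega)
        have e4 : min k (d-1) = d - 1 := min_eq_right (by omega)
        rw [e1, e3, pow_zero, one_mul]
        rw [e2, e4, pow_zero, one_mul] at hIH
        have e5 : d = (d-1) + 1 := by omega
        rw [e5, pow_succ]
        calc (1-p)^(d-1) * (1-p) ≤ (1-p)^(d-1) * p :=
            mul_le_mul_of_nonneg_left hp (pow_nonneg hq0 _)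
        _ = p * (1-p)^(d-1) := by ring
        _ ≤ p * prodProb p (fun x => evalGF2 g x = true) :=
            mul_le_mul_of_nonneg_left hIH hp0
    by_cases hG0 : G = ∅
    · -- g = h, f = (1+x_i) h
      have hgh : g = h := by
        have : symmDiff g h = ⊥ := by rw [← hGdef, hG0, Finset.bot_eq_empty]
        exact symmDiff_eq_bot.mp this
      have hhne : h.Nonempty := Finset.nonempty_iff_ne_empty.mpr hh0
      have hPrG : prodProb p (fun x => evalGF2 G x = true) = 0 := by
        apply prodProb_of_false
        intro x
        rw [hG0, evalGF2_empty]
        exact Bool.false_ne_true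
      have hcardP : P.card = 2 * h.card := by
        rw [← hcardsplit, ← hcardg, hgh]; ring
      have hk1 : 1 ≤ k := by
        rcases Nat.eq_zero_or_pos k with rfl | hk
        · exfalso
          have h1 : 1 ≤ h.card := Finset.card_pos.mpr hhne
          have h2 : (2:ℕ) ^ (0+1) = 2 := by norm_num
          omega
        · exact hk
      have hck : h.card < 2 ^ ((k-1)+1) := by
        have : 2 ^ (k+1) = 2 ^ k * 2 := pow_succ 2 k
        have e : (k-1)+1 = k := by omega
        rw [e]
        have h2k : 2 ^ (k+1) = 2 * 2 ^ k := by rw [pow_succ]; ring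
        omega
      have hdegh' : ∀ M ∈ h, M.card ≤ d - 1 := by
        intro M hM; exact hdegg M (hgh ▸ hM)
      have hIH := ih (d-1) (k-1) h hbUh hhne hdegh' hck
      rw [hsplit, hPrG, mul_zero, zero_add]
      have e1 : (d-1) - (k-1) = d - k := by omega
      have e2 : min k d = min (k-1) (d-1) + 1 := by omega
      rw [e1] at hIH
      rw [e2, pow_succ]
      calc p^(d-k) * ((1-p)^(min (k-1) (d-1)) * (1-p))
          = (1-p) * (p^(d-k) * (1-p)^(min (k-1) (d-1))) := by ring
      _ ≤ (1-p) * prodProb p (fun x => evalGF2 h x = true) :=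
          mul_le_mul_of_nonneg_left hIH hq0
    · -- both nonempty
      have hGne : G.Nonempty := Finset.nonempty_iff_ne_empty.mpr hG0
      have hhne : h.Nonempty := Finset.nonempty_iff_ne_empty.mpr hh0
      have hcardG : G.card < 2 ^ (k+1) := by
        have hsub : G ⊆ g ∪ h := by
          intro M hM
          rcases Finset.mem_symmDiff.mp hM with ⟨h1, -⟩ | ⟨h1, -⟩
          · exact Finset.mem_union_left _ h1
          · exact Finset.mem_union_right _ h1
        have := Finset.card_le_card hsub
        have := Finset.card_union_le g h
        omega
      have hcardh : h.card < 2 ^ (k+1) := by omega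
      have hdegG' : ∀ M ∈ G, M.card ≤ d := hdegG
      have hIH1 := ih d k G hbUG hGne hdegG' hcardG
      have hIH2 := ih d k h hbUh hhne hdegh hcardh
      rw [hsplit]
      calc p^(d-k) * (1-p)^(min k d)
          = p * (p^(d-k) * (1-p)^(min k d)) + (1-p) * (p^(d-k) * (1-p)^(min k d)) := by ring
      _ ≤ p * prodProb p (fun x => evalGF2 G x = true)
            + (1-p) * prodProb p (fun x => evalGF2 h x = true) :=
          add_le_add (mul_le_mul_of_nonneg_left hIH1 hp0)
            (mul_le_mul_of_nonneg_left hIH2 hq0)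

/-- for a nonzero `s`-sparse degree-`d` polynomial over GF(2)
with `d ≥ 2⌊log₂ s⌋`, taking `p' = (d - ⌊log₂ s⌋)/d`,
`Pr_{D_{n,p'}}[f=1] ≥ 2^{-H₂(⌊log₂ s⌋/d)·d}`. -/
theorem stmt3 {n d s : ℕ} (P : Finset (Finset (Fin n)))
    (hne : P.Nonempty) (hsparse : P.card ≤ s) (hdeg : ∀ M ∈ P, M.card ≤ d)
    (hd : 2 * Nat.log 2 s ≤ d) (hdpos : 0 < d)
    (p' : ℝ) (hp' : p' = ((d : ℝ) - Nat.log 2 s) / d) :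
    prodProb p' (fun x => evalGF2 P x = true) ≥
      2 ^ (-(binEnt ((Nat.log 2 s : ℝ) / d) * d)) := by
  set k := Nat.log 2 s with hk
  have hkd : k ≤ d := by omega
  have hD : (0:ℝ) < (d:ℝ) := Nat.cast_pos.mpr hdpos
  have hKD : (k:ℝ) ≤ (d:ℝ) := Nat.cast_le.mpr hkd
  have h2k : (2:ℝ) * k ≤ d := by exact_mod_cast hd
  have hcard : P.card < 2 ^ (k+1) :=
    lt_of_le_of_lt hsparse (Nat.lt_pow_succ_log_self (by norm_num) s)
  have h1p' : 1 - p' = (k:ℝ)/d := by rw [hp']; field_simp; ring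
  have hp'1 : p' ≤ 1 := by
    rw [hp', div_le_one hD]
    have : (0:ℝ) ≤ (k:ℝ) := Nat.cast_nonneg k
    linarith
  have hph : 1 - p' ≤ p' := by
    rw [h1p', hp', div_le_div_iff_of_pos_right hD]
    linarith
  have hkey := key p' hph hp'1 ((P.biUnion id).card) d k P le_rfl hne hdeg hcard
  rw [min_eq_left hkd] at hkey
  rw [ge_iff_le]
  refine le_trans (le_of_eq ?_) hkey
  rcases Nat.eq_zero_or_pos k with hk0 | hk1
  · have hp'e : p' = 1 := by
      rw [hk0] at h1p'
      simp at h1p'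
      linarith
    rw [hk0, hp'e]
    norm_num [binEnt, Real.logb_one]
  · have hkdlt : k < d := by omega
    have hq0 : (0:ℝ) < (k:ℝ)/d := div_pos (Nat.cast_pos.mpr hk1) hD
    have hq1 : (k:ℝ)/d < 1 := (div_lt_one hD).mpr (Nat.cast_lt.mpr hkdlt)
    set q : ℝ := (k:ℝ)/d with hqdef
    have hqD : q * d = (k:ℝ) := by
      rw [hqdef]; field_simp
    have h1qD : (1-q) * d = ((d - k : ℕ) : ℝ) := by
      rw [Nat.cast_sub hkd, hqdef]
      field_simp
    have hp'q : p' = 1 - q := by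
      rw [hp', hqdef]
      field_simp
    have h1p'q : 1 - p' = q := by rw [hp'q]; ring
    have hexp : -(binEnt q * d)
        = Real.logb 2 q * (q * d) + Real.logb 2 (1-q) * ((1-q) * d) := by
      rw [binEnt]; ring
    rw [hexp, hqD, h1qD, Real.rpow_add (by norm_num : (0:ℝ) < 2),
      Real.rpow_mul (by norm_num : (0:ℝ) ≤ 2),
      Real.rpow_mul (by norm_num : (0:ℝ) ≤ 2),
      Real.rpow_logb (by norm_num) (by norm_num) hq0,
      Real.rpow_logb (by norm_num) (by norm_num) (by linarith : (0:ℝ) < 1 - q),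
      Real.rpow_natCast, Real.rpow_natCast, h1p'q, hp'q]
    ring
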